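/- The invariant S_o is invariant under the second homotopy move: if P₁ = (𝒜,(xAByBAz)) with |A| = τ(|B|) and P₂ = (𝒜∖{A,B},(xyz)), then S_o(P₁) = S_o(P₂). In particular l_{P₁}(D) = l_{P₂}(D) for every D ∈ 𝒜∖{A,B}, and ε(A)+ε(B) = 0 in the relevant coefficient group. -/

import Mathlib

/-- A phrase over alphabet `α`: a flattened list of entries where `none` is the
component separator `|` and `some (n, a)` is an occurrence of the letter with
name `n` and projection `a ∈ α`. -/
abbrev Phrase (α : Type) := List (Option (ℕ × α))

/-- `P` is a nanophrase: every occurring letter occurs exactly twice, and a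
letter name determines its projection. -/
def isNanoP {α : Type} [DecidableEq α] (P : Phrase α) : Prop :=
  ∀ p ∈ P.reduceOption, P.reduceOption.count p = 2 ∧
    ∀ q ∈ P.reduceOption, q.1 = p.1 → q.2 = p.2

/-- The three `(Q,R,S)`-homotopy moves on phrases. -/
inductive PMove {α : Type} (Q : Set α) (R : Set (α × α)) (S : Set (α × α × α)) :
    Phrase α → Phrase α → Prop
  | m1 (x y : Phrase α) (n : ℕ) (a : α) (h : a ∈ Q) :
      PMove Q R S (x ++ [some (n, a), some (n, a)] ++ y) (x ++ y)
  | m2 (x y z : Phrase α) (n m : ℕ) (a b : α) (h : (a, b) ∈ R) :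
      PMove Q R S
        (x ++ [some (n, a), some (m, b)] ++ y ++ [some (m, b), some (n, a)] ++ z)
        (x ++ y ++ z)
  | m3 (x y z t : Phrase α) (n m p : ℕ) (a b c : α) (h : (a, b, c) ∈ S) :
      PMove Q R S
        (x ++ [some (n, a), some (m, b)] ++ y ++ [some (n, a), some (p, c)] ++ z ++
          [some (m, b), some (p, c)] ++ t)
        (x ++ [some (m, b), some (n, a)] ++ y ++ [some (p, c), some (n, a)] ++ z ++
          [some (p, c), some (m, b)] ++ t)

/-- Isomorphism of phrases: an injective renaming of letter names preserving
projections and the phrase structure. -/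
def PIso {α : Type} (P₁ P₂ : Phrase α) : Prop :=
  ∃ f : Equiv.Perm ℕ, P₂ = P₁.map (Option.map fun q => (f q.1, q.2))

/-- One step of `(Q,R,S)`-homotopy: an isomorphism, a move, or an inverse move. -/
def PStep {α : Type} (Q : Set α) (R : Set (α × α)) (S : Set (α × α × α))
    (P₁ P₂ : Phrase α) : Prop :=
  PIso P₁ P₂ ∨ PMove Q R S P₁ P₂ ∨ PMove Q R S P₂ P₁

/-- `(Q,R,S)`-homotopy of phrases. -/
def PHomotopic {α : Type} (Q : Set α) (R : Set (α × α)) (S : Set (α × α × α)) :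
    Phrase α → Phrase α → Prop :=
  Relation.ReflTransGen (PStep Q R S)

/-- The number of components (length) of a phrase. -/
def compCount {α : Type} (P : Phrase α) : ℕ := (P.filter fun o => o.isNone).length + 1

/-- The data of a complete representative system for the orbits of the
involution `τ`: orbits are indexed by `1,…,l+m`, the first `l` being free
(size 2) and the last `m` fixed points; `rep q` is the chosen representative of
the `q`-th orbit and `orb a` is the index of the orbit of `a`. -/
def IsCRS {α : Type} (τ : α → α) (l m : ℕ) (rep : ℕ → α) (orb : α → ℕ) : Prop :=
  Function.Involutive τ ∧
  (∀ a : α, 1 ≤ orb a ∧ orb a ≤ l + m) ∧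
  (∀ a : α, a = rep (orb a) ∨ a = τ (rep (orb a))) ∧
  (∀ q : ℕ, 1 ≤ q → q ≤ l + m → orb (rep q) = q) ∧
  (∀ q : ℕ, 1 ≤ q → q ≤ l + m → (q ≤ l ↔ τ (rep q) ≠ rep q)) ∧
  (∀ a : α, orb (τ a) = orb a)

/-- The subgroup of `∏_{(p,q)} ℤ` by which one quotients to obtain the mixed
group `∏ K_{(p,q)}` with `K_{(p,q)} = ℤ` if `p,q ≤ l` and `ℤ/2ℤ` otherwise. -/
def Ksub (l : ℕ) : AddSubgroup ((ℕ × ℕ) → ℤ) where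
  carrier := {f | ∀ pq : ℕ × ℕ,
    (pq.1 ≤ l ∧ pq.2 ≤ l → f pq = 0) ∧ (¬(pq.1 ≤ l ∧ pq.2 ≤ l) → (2 : ℤ) ∣ f pq)}
  zero_mem' := fun pq => ⟨fun _ => rfl, fun _ => dvd_zero 2⟩
  add_mem' := by
    intro f g hf hg pq
    refine ⟨fun h => ?_, fun h => ?_⟩
    · show f pq + g pq = 0
      rw [(hf pq).1 h, (hg pq).1 h, add_zero]
    · exact dvd_add ((hf pq).2 h) ((hg pq).2 h)
  neg_mem' := by
    intro f hf pq
    refine ⟨fun h => ?_, fun h => ?_⟩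
    · show -f pq = 0
      rw [(hf pq).1 h, neg_zero]
    · exact dvd_neg.mpr ((hf pq).2 h)

/-- The group `∏ K_{(p,q)}`, `K_{(p,q)} = ℤ` if `p,q ≤ l`, else `ℤ/2ℤ`. -/
def KG (l : ℕ) := ((ℕ × ℕ) → ℤ) ⧸ Ksub l

instance (l : ℕ) : AddCommGroup (KG l) := QuotientAddGroup.Quotient.addCommGroup _

/-- The canonical projection onto `∏ K_{(p,q)}`. -/
def kmk (l : ℕ) : ((ℕ × ℕ) → ℤ) → KG l := QuotientAddGroup.mk

/-- The basis vector `e_{(p,q)}`. -/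
def ehat (p q : ℕ) : (ℕ × ℕ) → ℤ := fun pq => if pq = (p, q) then 1 else 0

/-- The coordinate of `v ∈ ∏ K_{(p,q)}` at `pq` is zero (as an element of `ℤ`
if `pq` is a free-free pair, of `ℤ/2ℤ` otherwise). -/
def ZeroCoord (l : ℕ) (v : KG l) (pq : ℕ × ℕ) : Prop :=
  ∀ f : (ℕ × ℕ) → ℤ, kmk l f = v →
    ((pq.1 ≤ l ∧ pq.2 ≤ l → f pq = 0) ∧ (¬(pq.1 ≤ l ∧ pq.2 ≤ l) → (2 : ℤ) ∣ f pq))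

/-- `v` is of type (i): its coordinates `(r,s)` with `r > l` all vanish. -/
def TypeI (l : ℕ) (v : ℕ → KG l) : Prop :=
  ∀ (j r s : ℕ), l < r → ZeroCoord l (v j) (r, s)

/-- `v` is of type (ii): its coordinates `(r,s)` with `r ≤ l` all vanish. -/
def TypeII (l : ℕ) (v : ℕ → KG l) : Prop :=
  ∀ (j r s : ℕ), r ≤ l → ZeroCoord l (v j) (r, s)

/-- `ε(a) = +1` if `a` is a chosen representative, `−1` otherwise. -/
def eps {α : Type} [DecidableEq α] (rep : ℕ → α) (orb : α → ℕ) (a : α) : ℤ :=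
  if a = rep (orb a) then 1 else -1

/-- Flatten a phrase, recording for each occurrence its letter name, projection,
and the (1-based) index of the component in which it occurs. -/
def flat {α : Type} : Phrase α → ℕ → List (ℕ × α × ℕ)
  | [], _ => []
  | Option.none :: P, i => flat P (i + 1)
  | Option.some q :: P, i => (q.1, q.2, i) :: flat P i

/-- The positions (0-based, in the flattening of `P`) of the occurrences of the
letter named `n`. -/
def posL {α : Type} (P : Phrase α) (n : ℕ) : List ℕ :=
  ((((flat P 1).zipIdx.map Prod.swap).filter fun iq => iq.2.1 = n).map Prod.fst)

/-- Position of the first occurrence of the letter named `n`. -/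
def pos1 {α : Type} (P : Phrase α) (n : ℕ) : ℕ := (posL P n).headI

/-- Position of the second occurrence of the letter named `n`. -/
def pos2 {α : Type} (P : Phrase α) (n : ℕ) : ℕ := (posL P n).getLast!

/-- The projection in `α` of the letter named `n`. -/
def projP {α : Type} [Inhabited α] (P : Phrase α) (n : ℕ) : α :=
  (((flat P 1).filter fun q => q.1 = n).headI).2.1

/-- The component containing the first occurrence of the letter named `n`. -/
def comp1 {α : Type} [Inhabited α] (P : Phrase α) (n : ℕ) : ℕ :=
  ((((flat P 1).filter fun q => q.1 = n).map fun q => q.2.2)).headI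

/-- The component containing the second occurrence of the letter named `n`. -/
def comp2 {α : Type} [Inhabited α] (P : Phrase α) (n : ℕ) : ℕ :=
  ((((flat P 1).filter fun q => q.1 = n).map fun q => q.2.2)).getLast!

/-- Fukunaga's `σ_P^j(A,B)` (a lift to `∏ ℤ`; its class in `∏ K_{(p,q)}` is the
actual value): `± e_{(p,q)}` according to the interlacement pattern of `A,B`,
the component of the relevant occurrence of `B`, and whether `|B|` is a chosen
representative; `0` if `A` and `B` are not interlaced. -/
def sigmaHat {α : Type} [DecidableEq α] [Inhabited α] (rep : ℕ → α) (orb : α → ℕ)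
    (P : Phrase α) (j : ℕ) (nA nB : ℕ) : (ℕ × ℕ) → ℤ :=
  if pos1 P nA < pos1 P nB ∧ pos1 P nB < pos2 P nA ∧ pos2 P nA < pos2 P nB ∧
      comp2 P nB = j then
    eps rep orb (projP P nB) • ehat (orb (projP P nA)) (orb (projP P nB))
  else if pos1 P nB < pos1 P nA ∧ pos1 P nA < pos2 P nB ∧ pos2 P nB < pos2 P nA ∧
      comp1 P nB = j then
    (-eps rep orb (projP P nB)) • ehat (orb (projP P nA)) (orb (projP P nB))
  else 0

/-- The list of letter names occurring in `P`. -/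
def lettersP {α : Type} (P : Phrase α) : List ℕ :=
  ((P.reduceOption.map Prod.fst)).dedup

/-- The list `𝒜_j` of letter names occurring in the `j`-th component of `P`. -/
def compLetters {α : Type} (P : Phrase α) (j : ℕ) : List ℕ :=
  ((((flat P 1).filter fun q => q.2.2 = j).map fun q => q.1)).dedup

/-- A lift of `l_{P,j}(A) = Σ_{X ∈ 𝒜} σ_P^j(A,X)`. -/
def lHat {α : Type} [DecidableEq α] [Inhabited α] (rep : ℕ → α) (orb : α → ℕ)
    (P : Phrase α) (nA : ℕ) (j : ℕ) : (ℕ × ℕ) → ℤ :=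
  ((lettersP P).map fun nX => sigmaHat rep orb P j nA nX).sum

/-- `l_P(A) ∈ (∏ K_{(p,q)})^k`, as a function of the component index `j`. -/
def lP {α : Type} [DecidableEq α] [Inhabited α] (l : ℕ) (rep : ℕ → α) (orb : α → ℕ)
    (P : Phrase α) (nA : ℕ) : ℕ → KG l :=
  fun j => kmk l (lHat rep orb P nA j)

open Classical in
/-- The type (i) (`ℤ`-valued) part of `(B_P)_j`:
`(B_P)_j(v) = Σ_{A ∈ 𝒜_j, l_P(A) = v} ε(A)` if `v` is of type (i), else `0`. -/
noncomputable def B1 {α : Type} [DecidableEq α] [Inhabited α] (l : ℕ)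
    (rep : ℕ → α) (orb : α → ℕ) (P : Phrase α) (j : ℕ) (v : ℕ → KG l) : ℤ :=
  if TypeI l v then
    (((compLetters P j).filter fun nA => lP l rep orb P nA = v).map fun nA =>
      eps rep orb (projP P nA)).sum
  else 0

open Classical in
/-- The type (ii) (`ℤ/2ℤ`-valued) part of `(B_P)_j`:
`(B_P)_j(v) = Σ_{A ∈ 𝒜_j, l_P(A) = v} ε(A) mod 2` if `v` is of type (ii), else `0`. -/
noncomputable def B2 {α : Type} [DecidableEq α] [Inhabited α] (l : ℕ)
    (rep : ℕ → α) (orb : α → ℕ) (P : Phrase α) (j : ℕ) (v : ℕ → KG l) : ZMod 2 :=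
  if TypeII l v then
    ((((compLetters P j).filter fun nA => lP l rep orb P nA = v).map fun nA =>
      eps rep orb (projP P nA)).sum : ZMod 2)
  else 0

/-- Equality of the invariants `S_o` of two nanophrases: the maps `(B_P)_j`
agree (on nonzero vectors, where they are defined). -/
def SoEq {α : Type} [DecidableEq α] [Inhabited α] (l : ℕ) (rep : ℕ → α)
    (orb : α → ℕ) (P₁ P₂ : Phrase α) : Prop :=
  ∀ (j : ℕ) (v : ℕ → KG l), v ≠ 0 →
    B1 l rep orb P₁ j v = B1 l rep orb P₂ j v ∧
    B2 l rep orb P₁ j v = B2 l rep orb P₂ j v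

section Aux
variable {α : Type}

/-- number of separators -/
def nsep (P : Phrase α) : ℕ := (P.filter fun o => o.isNone).length

theorem flat_append (P Q : Phrase α) (i : ℕ) :
    flat (P ++ Q) i = flat P i ++ flat Q (i + nsep P) := by
  induction P generalizing i with
  | nil => simp [flat, nsep]
  | cons o P ih =>
    cases o with
    | none => simp [flat, nsep, ih, List.filter]; ring_nf
    | some q => simp [flat, nsep, ih, List.filter]

theorem flat_proj (P : Phrase α) (i : ℕ) :
    (flat P i).map (fun t => (t.1, t.2.1)) = P.reduceOption := by
  induction P generalizing i with
  | nil => rfl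
  | cons o P ih =>
    cases o with
    | none => simpa [flat] using ih _
    | some q => simp [flat, ih]

/-- positions of occurrences of name `n` in a flattened list, starting at index `k` -/
def posAux (L : List (ℕ × α × ℕ)) (n : ℕ) (k : ℕ) : List ℕ :=
  match L with
  | [] => []
  | t :: L => if t.1 = n then k :: posAux L n (k + 1) else posAux L n (k + 1)

theorem posAux_eq (L : List (ℕ × α × ℕ)) (n k : ℕ) :
    (((L.zipIdx k).map Prod.swap).filter fun iq => iq.2.1 = n).map Prod.fst = posAux L n k := by
  induction L generalizing k with
  | nil => rfl
  | cons t L ih =>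
    simp only [List.zipIdx_cons, List.map_cons, posAux, List.filter]
    by_cases h : t.1 = n <;> simp [h, ih]

theorem posL_eq (P : Phrase α) (n : ℕ) : posL P n = posAux (flat P 1) n 0 := by
  rw [posL, posAux_eq]

theorem posAux_append (L M : List (ℕ × α × ℕ)) (n k : ℕ) :
    posAux (L ++ M) n k = posAux L n k ++ posAux M n (k + L.length) := by
  induction L generalizing k with
  | nil => simp [posAux]
  | cons t L ih =>
    have e : k + (L.length + 1) = k + 1 + L.length := by omega
    simp only [List.cons_append, posAux, List.length_cons, e, ih]
    by_cases h : t.1 = n <;> simp [h, ih (k+1)]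

theorem posAux_shift (L : List (ℕ × α × ℕ)) (n k c : ℕ) :
    posAux L n (k + c) = (posAux L n k).map (· + c) := by
  induction L generalizing k with
  | nil => rfl
  | cons t L ih =>
    simp only [posAux]
    by_cases h : t.1 = n <;> simp [h, ← ih, Nat.add_right_comm]

theorem posAux_mem (L : List (ℕ × α × ℕ)) (n k : ℕ) :
    ∀ p ∈ posAux L n k, k ≤ p ∧ p < k + L.length := by
  induction L generalizing k with
  | nil => simp [posAux]
  | cons t L ih =>
    intro p hp
    simp only [posAux] at hp
    simp only [List.length_cons]
    by_cases h : t.1 = n <;> simp [h] at hp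
    · rcases hp with rfl | hp
      · simp
      · have := ih (k+1) p hp; omega
    · have := ih (k+1) p hp; omega

theorem posAux_nil_iff (L : List (ℕ × α × ℕ)) (n k : ℕ) :
    posAux L n k = [] ↔ ∀ t ∈ L, t.1 ≠ n := by
  induction L generalizing k with
  | nil => simp [posAux]
  | cons t L ih =>
    simp only [posAux]
    by_cases h : t.1 = n <;> simp [h, ih]

theorem posAux_no (L : List (ℕ × α × ℕ)) (n k : ℕ) (h : ∀ t ∈ L, t.1 ≠ n) :
    posAux L n k = [] := (posAux_nil_iff L n k).2 h

end Aux

theorem nsep_append {α : Type} (P Q : Phrase α) : nsep (P ++ Q) = nsep P + nsep Q := by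
  simp [nsep]

theorem posAux_hit {α : Type} {t : ℕ × α × ℕ} {n : ℕ} (h : t.1 = n) (L : List (ℕ × α × ℕ)) (k : ℕ) :
    posAux (t :: L) n k = k :: posAux L n (k + 1) := by simp [posAux, h]

theorem posAux_miss {α : Type} {t : ℕ × α × ℕ} {n : ℕ} (h : t.1 ≠ n) (L : List (ℕ × α × ℕ)) (k : ℕ) :
    posAux (t :: L) n k = posAux L n (k + 1) := by simp [posAux, h]

theorem posAux_arg {α : Type} (L : List (ℕ × α × ℕ)) (n : ℕ) {k k' : ℕ} (h : k = k') :
    posAux L n k = posAux L n k' := by rw [h]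
section Phi

/-- The position shift map for the second move. -/
def phi (E Y p : ℕ) : ℕ := if p < E then p else if p < E + Y then p + 2 else p + 4

theorem phi_lt_phi {E Y p q : ℕ} : phi E Y p < phi E Y q ↔ p < q := by
  unfold phi; split_ifs <;> omega

theorem phi_lt_E {E Y p : ℕ} : phi E Y p < E ↔ p < E := by
  unfold phi; split_ifs <;> omega

theorem phiC1 {E Y p1 p2 : ℕ} :
    (phi E Y p1 < E ∧ E < phi E Y p2 ∧ phi E Y p2 < E + Y + 3) ↔
      (p1 < E ∧ E ≤ p2 ∧ p2 < E + Y) := by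
  unfold phi; split_ifs <;> omega

theorem phiC1' {E Y p1 p2 : ℕ} :
    (phi E Y p1 < E + 1 ∧ E + 1 < phi E Y p2 ∧ phi E Y p2 < E + Y + 2) ↔
      (p1 < E ∧ E ≤ p2 ∧ p2 < E + Y) := by
  unfold phi; split_ifs <;> omega

theorem phiC2 {E Y p1 p2 : ℕ} :
    (E < phi E Y p1 ∧ phi E Y p1 < E + Y + 3 ∧ E + Y + 3 < phi E Y p2) ↔
      (E ≤ p1 ∧ p1 < E + Y ∧ E + Y ≤ p2) := by
  unfold phi; split_ifs <;> omega

theorem phiC2' {E Y p1 p2 : ℕ} :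
    (E + 1 < phi E Y p1 ∧ phi E Y p1 < E + Y + 2 ∧ E + Y + 2 < phi E Y p2) ↔
      (E ≤ p1 ∧ p1 < E + Y ∧ E + Y ≤ p2) := by
  unfold phi; split_ifs <;> omega

end Phi

section Misc
variable {α : Type} {β : Type}

theorem headI_map [Inhabited α] [Inhabited β] (f : α → β) (L : List α) (h : L ≠ []) :
    (L.map f).headI = f L.headI := by
  cases L with
  | nil => exact absurd rfl h
  | cons a L => simp

theorem getLastBang_eq [Inhabited α] (L : List α) (h : L ≠ []) : L.getLast! = L.getLast h :=
  List.getLast!_of_getLast? (List.getLast?_eq_getLast h)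

theorem getLastBang_map [Inhabited α] [Inhabited β] (f : α → β) (L : List α) (h : L ≠ []) :
    (L.map f).getLast! = f L.getLast! := by
  have h' : L.map f ≠ [] := by simpa using h
  rw [getLastBang_eq L h, getLastBang_eq _ h', List.getLast_map]

theorem listSum_apply {γ : Type} [AddCommMonoid γ] (L : List α) (f : α → β → γ) (pt : β) :
    ((L.map f).sum) pt = (L.map fun a => f a pt).sum := by
  induction L with
  | nil => rfl
  | cons a L ih =>
    simp only [List.map_cons, List.sum_cons, ← ih]
    rfl

theorem smul_ehat_apply (c : ℤ) (q s : ℕ) (pt : ℕ × ℕ) (h : pt.1 ≠ q) :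
    (c • ehat q s) pt = 0 := by
  have : ehat q s pt = 0 := by
    unfold ehat
    rw [if_neg]
    intro he; apply h; rw [he]
  show c • ehat q s pt = 0
  rw [this, smul_zero]

end Misc

section Eps
variable {α : Type} [DecidableEq α]

theorem eps_add_eps (τ : α → α) (l m : ℕ) (rep : ℕ → α) (orb : α → ℕ)
    (hcrs : IsCRS τ l m rep orb) (b : α) (hne : τ b ≠ b) : eps rep orb (τ b) + eps rep orb b = 0 := by
  obtain ⟨hinv, hbd, hrt, hor, hfree, hot⟩ := hcrs
  rcases hrt b with hb | hb
  · have h1 : eps rep orb b = 1 := by rw [eps, if_pos hb]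
    have hc : τ b ≠ rep (orb (τ b)) := by rw [hot b, ← hb]; exact hne
    have h2 : eps rep orb (τ b) = -1 := by rw [eps, if_neg hc]
    rw [h1, h2]; ring
  · have hτ : τ b = rep (orb b) := by nth_rewrite 1 [hb]; exact hinv _
    have hbne : b ≠ rep (orb b) := by
      intro h; apply hne; rw [hτ, ← h]
    have h1 : eps rep orb b = -1 := by rw [eps, if_neg hbne]
    have hc : τ b = rep (orb (τ b)) := by rw [hot b]; exact hτ
    have h2 : eps rep orb (τ b) = 1 := by rw [eps, if_pos hc]
    rw [h1, h2]; ring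

theorem eps_add_eps_mod2 (τ : α → α) (l m : ℕ) (rep : ℕ → α) (orb : α → ℕ)
    (hcrs : IsCRS τ l m rep orb) (b : α) : ((eps rep orb (τ b) + eps rep orb b : ℤ) : ZMod 2) = 0 := by
  by_cases hne : τ b = b
  · rw [hne]
    have : eps rep orb b = 1 ∨ eps rep orb b = -1 := by
      unfold eps; split_ifs <;> simp
    rcases this with h | h <;> rw [h] <;> decide
  · rw [eps_add_eps τ l m rep orb hcrs b hne]; simp

theorem orb_gt_of_fixed (τ : α → α) (l m : ℕ) (rep : ℕ → α) (orb : α → ℕ)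
    (hcrs : IsCRS τ l m rep orb) (b : α) (hfix : τ b = b) : l < orb b := by
  obtain ⟨hinv, hbd, hrt, hor, hfree, hot⟩ := hcrs
  have hb1 := (hbd b).1
  have hb2 := (hbd b).2
  have hrr : τ (rep (orb b)) = rep (orb b) := by
    rcases hrt b with hb | hb
    · rw [← hb]; exact hfix
    · have hτ : τ b = rep (orb b) := by nth_rewrite 1 [hb]; exact hinv _
      rw [← hτ, hinv b, hfix]
  by_contra h
  push_neg at h
  exact ((hfree (orb b) hb1 hb2).1 h) hrr

theorem ksub_mem_aux (τ : α → α) (l m : ℕ) (rep : ℕ → α) (orb : α → ℕ)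
    (hcrs : IsCRS τ l m rep orb) (b : α) (c : ℤ) (r : ℕ) :
    (c * (eps rep orb (τ b) + eps rep orb b)) • ehat r (orb b) ∈ Ksub l := by
  by_cases hfix : τ b = b
  · have hq : l < orb b := orb_gt_of_fixed τ l m rep orb hcrs b hfix
    intro pq
    constructor
    · rintro ⟨h1, h2⟩
      show (c * _) * ehat r (orb b) pq = 0
      rw [ehat, if_neg, mul_zero]
      rintro rfl
      omega
    · intro h
      show (2 : ℤ) ∣ (c * _) * ehat r (orb b) pq
      have : eps rep orb (τ b) + eps rep orb b = 2 * eps rep orb b := by rw [hfix]; ring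
      rw [this]
      exact ⟨c * eps rep orb b * ehat r (orb b) pq, by ring⟩
  · rw [eps_add_eps τ l m rep orb hcrs b hfix, mul_zero, zero_smul]
    exact zero_mem _
section Main
variable {α : Type} [DecidableEq α] [Inhabited α]

theorem mem_lettersP {P : Phrase α} {n : ℕ} :
    n ∈ lettersP P ↔ ∃ p ∈ P.reduceOption, p.1 = n := by
  simp [lettersP, List.mem_dedup, List.mem_map]

theorem mem_compLetters {P : Phrase α} {j n : ℕ} :
    n ∈ compLetters P j ↔ ∃ t ∈ flat P 1, t.1 = n ∧ t.2.2 = j := by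
  simp [compLetters, List.mem_dedup, List.mem_map, List.mem_filter]

theorem flat_mem {w : Phrase α} {i : ℕ} {t : ℕ × α × ℕ} (ht : t ∈ flat w i) :
    (t.1, t.2.1) ∈ w.reduceOption := by
  rw [← flat_proj w i]
  exact List.mem_map_of_mem ht

theorem flat_mem' {w : Phrase α} {i : ℕ} {p : ℕ × α} (hp : p ∈ w.reduceOption) :
    ∃ t ∈ flat w i, t.1 = p.1 := by
  rw [← flat_proj w i] at hp
  obtain ⟨t, ht, rfl⟩ := List.mem_map.1 hp
  exact ⟨t, ht, rfl⟩

end Main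
set_option maxHeartbeats 1000000 in
theorem stmt15 {α : Type} [DecidableEq α] [Inhabited α] (τ : α → α) (l m : ℕ)
    (rep : ℕ → α) (orb : α → ℕ) (hcrs : IsCRS τ l m rep orb)
    (x y z : Phrase α) (nA nB : ℕ) (b : α)
    (P₁ P₂ : Phrase α)
    (h₁ : P₁ = x ++ [some (nA, τ b), some (nB, b)] ++ y ++
      [some (nB, b), some (nA, τ b)] ++ z)
    (h₂ : P₂ = x ++ y ++ z)
    (hnano : isNanoP P₁) :
    SoEq l rep orb P₁ P₂ ∧
    (∀ nD ∈ lettersP P₁, nD ≠ nA → nD ≠ nB →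
      ∀ j : ℕ, lP l rep orb P₁ nD j = lP l rep orb P₂ nD j) ∧
    (τ b ≠ b → eps rep orb (τ b) + eps rep orb b = 0) ∧
    ((eps rep orb (τ b) + eps rep orb b : ℤ) : ZMod 2) = 0 := by
  classical
  have hot : ∀ a, orb (τ a) = orb a := hcrs.2.2.2.2.2
  have hro : P₁.reduceOption = x.reduceOption ++ (nA, τ b) :: (nB, b) ::
      (y.reduceOption ++ (nB, b) :: (nA, τ b) :: z.reduceOption) := by
    rw [h₁]; simp [List.reduceOption_append]
  have hro2 : P₂.reduceOption = x.reduceOption ++ (y.reduceOption ++ z.reduceOption) := by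
    rw [h₂]; simp [List.reduceOption_append]
  have hmemA : (nA, τ b) ∈ P₁.reduceOption := by rw [hro]; simp
  have hmemB : (nB, b) ∈ P₁.reduceOption := by rw [hro]; simp
  obtain ⟨hcountA, hdetA⟩ := hnano _ hmemA
  obtain ⟨hcountB, hdetB⟩ := hnano _ hmemB
  have hAB : nA ≠ nB := by
    intro h
    have hbb : b = τ b := hdetA (nB, b) hmemB h.symm
    rw [hro, ← h, ← hbb] at hcountA
    simp [List.count_append, List.count_cons] at hcountA
    omega
  have hnoA : ∀ t ∈ x.reduceOption ++ (y.reduceOption ++ z.reduceOption), t.1 ≠ nA := by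
    intro t ht hteq
    have htP : t ∈ P₁.reduceOption := by
      rw [hro]; simp at ht ⊢; tauto
    have ht2 : t.2 = τ b := hdetA t htP hteq
    have hteq' : t = (nA, τ b) := Prod.ext hteq ht2
    rw [hteq'] at ht
    rw [hro] at hcountA
    have h1 : 0 < List.count ((nA, τ b) : ℕ × α)
        (x.reduceOption ++ (y.reduceOption ++ z.reduceOption)) := List.count_pos_iff.2 ht
    simp only [List.count_append, List.count_cons_self, List.count_cons,
      List.count_append] at hcountA h1
    have hne : ¬((nB, b) = (nA, τ b)) := by
      intro hc; exact hAB (congrArg Prod.fst hc).symm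
    simp [hne] at hcountA
    omega
  have hnoB : ∀ t ∈ x.reduceOption ++ (y.reduceOption ++ z.reduceOption), t.1 ≠ nB := by
    intro t ht hteq
    have htP : t ∈ P₁.reduceOption := by
      rw [hro]; simp at ht ⊢; tauto
    have ht2 : t.2 = b := hdetB t htP hteq
    have hteq' : t = (nB, b) := Prod.ext hteq ht2
    rw [hteq'] at ht
    rw [hro] at hcountB
    have h1 : 0 < List.count ((nB, b) : ℕ × α)
        (x.reduceOption ++ (y.reduceOption ++ z.reduceOption)) := List.count_pos_iff.2 ht
    have hne : ¬((nA, τ b) = (nB, b)) := by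
      intro hc; exact hAB (congrArg Prod.fst hc)
    simp only [List.count_append, List.count_cons_self, List.count_cons,
      List.count_append] at hcountB h1
    simp [hne] at hcountB
    omega
  obtain ⟨cx, hcx⟩ : ∃ c, c = 1 + nsep x := ⟨_, rfl⟩
  obtain ⟨cy, hcy⟩ : ∃ c, c = cx + nsep y := ⟨_, rfl⟩
  obtain ⟨fx, hfx⟩ : ∃ L, L = flat x 1 := ⟨_, rfl⟩
  obtain ⟨fy, hfy⟩ : ∃ L, L = flat y cx := ⟨_, rfl⟩
  obtain ⟨fz, hfz⟩ : ∃ L, L = flat z cy := ⟨_, rfl⟩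
  obtain ⟨E, hEd⟩ : ∃ n, n = fx.length := ⟨_, rfl⟩
  obtain ⟨Y, hYd⟩ : ∃ n, n = fy.length := ⟨_, rfl⟩
  have hF1 : flat P₁ 1 = fx ++ (nA, τ b, cx) :: (nB, b, cx) ::
      (fy ++ (nB, b, cy) :: (nA, τ b, cy) :: fz) := by
    subst hcy hcx hfx hfy hfz
    rw [h₁]
    simp [flat_append, nsep_append, flat, nsep]
  have hF2 : flat P₂ 1 = fx ++ (fy ++ fz) := by
    subst hcy hcx hfx hfy hfz
    rw [h₂]
    simp [flat_append, nsep_append]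
  have hnoxA : ∀ t ∈ fx, t.1 ≠ nA := by
    intro t ht
    apply hnoA (t.1, t.2.1)
    subst hfx
    exact List.mem_append_left _ (flat_mem ht)
  have hnoxB : ∀ t ∈ fx, t.1 ≠ nB := by
    intro t ht
    apply hnoB (t.1, t.2.1)
    subst hfx
    exact List.mem_append_left _ (flat_mem ht)
  have hnoyA : ∀ t ∈ fy, t.1 ≠ nA := by
    intro t ht
    apply hnoA (t.1, t.2.1)
    subst hfy
    exact List.mem_append_right _ (List.mem_append_left _ (flat_mem ht))
  have hnoyB : ∀ t ∈ fy, t.1 ≠ nB := by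
    intro t ht
    apply hnoB (t.1, t.2.1)
    subst hfy
    exact List.mem_append_right _ (List.mem_append_left _ (flat_mem ht))
  have hnozA : ∀ t ∈ fz, t.1 ≠ nA := by
    intro t ht
    apply hnoA (t.1, t.2.1)
    subst hfz
    exact List.mem_append_right _ (List.mem_append_right _ (flat_mem ht))
  have hnozB : ∀ t ∈ fz, t.1 ≠ nB := by
    intro t ht
    apply hnoB (t.1, t.2.1)
    subst hfz
    exact List.mem_append_right _ (List.mem_append_right _ (flat_mem ht))
  -- explicit position data for nA and nB
  have hposLA : posL P₁ nA = [E, E + Y + 3] := by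
    rw [posL_eq, hF1, posAux_append, posAux_no _ _ _ hnoxA, posAux_hit rfl,
      posAux_miss (Ne.symm hAB), posAux_append, posAux_no _ _ _ hnoyA,
      posAux_miss (Ne.symm hAB), posAux_hit rfl, posAux_no _ _ _ hnozA]
    subst hEd hYd
    simp only [List.nil_append, List.length_nil, List.cons_append, List.nil_append]
    simp only [List.cons.injEq, and_true]
    omega
  have hposLB : posL P₁ nB = [E + 1, E + Y + 2] := by
    rw [posL_eq, hF1, posAux_append, posAux_no _ _ _ hnoxB, posAux_miss hAB, posAux_hit rfl,
      posAux_append, posAux_no _ _ _ hnoyB,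
      posAux_hit rfl, posAux_miss hAB, posAux_no _ _ _ hnozB]
    subst hEd hYd
    simp only [List.nil_append, List.length_nil, List.cons_append, List.nil_append]
    simp only [List.cons.injEq, and_true]
    omega
  have hp1A : pos1 P₁ nA = E := by rw [pos1, hposLA]; rfl
  have hp2A : pos2 P₁ nA = E + Y + 3 := by
    rw [pos2, hposLA, getLastBang_eq _ (by simp)]; simp
  have hp1B : pos1 P₁ nB = E + 1 := by rw [pos1, hposLB]; rfl
  have hp2B : pos2 P₁ nB = E + Y + 2 := by
    rw [pos2, hposLB, getLastBang_eq _ (by simp)]; simp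
  -- filtered occurrence lists
  have hfA : (flat P₁ 1).filter (fun q => q.1 = nA) = [(nA, τ b, cx), (nA, τ b, cy)] := by
    rw [hF1]
    simp only [List.filter_append, List.filter_cons]
    rw [List.filter_eq_nil_iff.2 (by intro t ht; simpa using hnoxA t ht),
      List.filter_eq_nil_iff.2 (by intro t ht; simpa using hnoyA t ht),
      List.filter_eq_nil_iff.2 (by intro t ht; simpa using hnozA t ht)]
    simp [hAB, Ne.symm hAB]
  have hfB : (flat P₁ 1).filter (fun q => q.1 = nB) = [(nB, b, cx), (nB, b, cy)] := by
    rw [hF1]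
    simp only [List.filter_append, List.filter_cons]
    rw [List.filter_eq_nil_iff.2 (by intro t ht; simpa using hnoxB t ht),
      List.filter_eq_nil_iff.2 (by intro t ht; simpa using hnoyB t ht),
      List.filter_eq_nil_iff.2 (by intro t ht; simpa using hnozB t ht)]
    simp [hAB, Ne.symm hAB]
  have hprojA : projP P₁ nA = τ b := by rw [projP, hfA]; rfl
  have hprojB : projP P₁ nB = b := by rw [projP, hfB]; rfl
  have hc1A : comp1 P₁ nA = cx := by rw [comp1, hfA]; rfl
  have hc1B : comp1 P₁ nB = cx := by rw [comp1, hfB]; rfl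
  have hc2A : comp2 P₁ nA = cy := by
    rw [comp2, hfA, List.map_cons, List.map_cons, getLastBang_eq _ (by simp)]; simp
  have hc2B : comp2 P₁ nB = cy := by
    rw [comp2, hfB, List.map_cons, List.map_cons, getLastBang_eq _ (by simp)]; simp
  -- transported data for other letters
  have hfilterT : ∀ n, n ≠ nA → n ≠ nB →
      (flat P₁ 1).filter (fun q => q.1 = n) = (flat P₂ 1).filter (fun q => q.1 = n) := by
    intro n hnA hnB
    rw [hF1, hF2]
    simp only [List.filter_append, List.filter_cons]
    simp [Ne.symm hnA, Ne.symm hnB]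
  have hprojT : ∀ n, n ≠ nA → n ≠ nB → projP P₁ n = projP P₂ n := by
    intro n h1 h2; rw [projP, projP, hfilterT n h1 h2]
  have hc1T : ∀ n, n ≠ nA → n ≠ nB → comp1 P₁ n = comp1 P₂ n := by
    intro n h1 h2; rw [comp1, comp1, hfilterT n h1 h2]
  have hc2T : ∀ n, n ≠ nA → n ≠ nB → comp2 P₁ n = comp2 P₂ n := by
    intro n h1 h2; rw [comp2, comp2, hfilterT n h1 h2]
  have hposLT : ∀ n, n ≠ nA → n ≠ nB → posL P₁ n = (posL P₂ n).map (phi E Y) := by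
    intro n h1 h2
    subst hEd hYd
    rw [posL_eq, posL_eq, hF1, hF2]
    rw [posAux_append, posAux_append, posAux_append,
      posAux_miss (Ne.symm h1), posAux_miss (Ne.symm h2), posAux_append,
      posAux_miss (Ne.symm h2), posAux_miss (Ne.symm h1), List.map_append, List.map_append]
    congr 1
    · have hc : ∀ p ∈ posAux fx n 0, phi fx.length fy.length p = id p := by
        intro p hp
        have hb := posAux_mem _ _ _ p hp
        simp only [phi, id]
        rw [if_pos (by omega)]
      rw [List.map_congr_left hc, List.map_id]
    congr 1
    · have hc : ∀ p ∈ posAux fy n (0 + fx.length),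
          phi fx.length fy.length p = p + 2 := by
        intro p hp
        have hb := posAux_mem _ _ _ p hp
        simp only [phi]
        rw [if_neg (by omega), if_pos (by omega)]
      rw [List.map_congr_left hc, ← posAux_shift]
    · have hc : ∀ p ∈ posAux fz n (0 + fx.length + fy.length),
          phi fx.length fy.length p = p + 4 := by
        intro p hp
        have hb := posAux_mem _ _ _ p hp
        simp only [phi]
        rw [if_neg (by omega), if_neg (by omega)]
      rw [List.map_congr_left hc, ← posAux_shift]
      exact posAux_arg _ _ (by omega)
  have hocc2 : ∀ n ∈ lettersP P₂, posL P₂ n ≠ [] := by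
    intro n hn
    obtain ⟨p, hp, rfl⟩ := mem_lettersP.1 hn
    obtain ⟨t, ht, hteq⟩ := flat_mem' (i := 1) hp
    rw [posL_eq]
    intro hnil
    exact (posAux_nil_iff _ _ _).1 hnil t ht hteq
  have hmem2 : ∀ n ∈ lettersP P₂, n ≠ nA ∧ n ≠ nB := by
    intro n hn
    obtain ⟨p, hp, rfl⟩ := mem_lettersP.1 hn
    rw [hro2] at hp
    exact ⟨hnoA p hp, hnoB p hp⟩
  have hp1T : ∀ n, n ≠ nA → n ≠ nB → posL P₂ n ≠ [] → pos1 P₁ n = phi E Y (pos1 P₂ n) := by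
    intro n h1 h2 hne
    rw [pos1, pos1, hposLT n h1 h2, headI_map _ _ hne]
  have hp2T : ∀ n, n ≠ nA → n ≠ nB → posL P₂ n ≠ [] → pos2 P₁ n = phi E Y (pos2 P₂ n) := by
    intro n h1 h2 hne
    rw [pos2, pos2, hposLT n h1 h2, getLastBang_map _ _ hne]
  have hL1mem : ∀ n, n ∈ lettersP P₁ ↔ n = nA ∨ n = nB ∨ n ∈ lettersP P₂ := by
    intro n
    rw [mem_lettersP, mem_lettersP, hro, hro2]
    constructor
    · rintro ⟨p, hp, rfl⟩
      simp only [List.mem_append, List.mem_cons] at hp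
      rcases hp with h | rfl | rfl | h | rfl | rfl | h
      · exact Or.inr (Or.inr ⟨p, by simp [h], rfl⟩)
      · exact Or.inl rfl
      · exact Or.inr (Or.inl rfl)
      · exact Or.inr (Or.inr ⟨p, by simp [h], rfl⟩)
      · exact Or.inr (Or.inl rfl)
      · exact Or.inl rfl
      · exact Or.inr (Or.inr ⟨p, by simp [h], rfl⟩)
    · rintro (h | h | ⟨p, hp, rfl⟩)
      · exact ⟨(nA, τ b), by simp, h.symm⟩
      · exact ⟨(nB, b), by simp, h.symm⟩
      · refine ⟨p, ?_, rfl⟩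
        simp only [List.mem_append, List.mem_cons] at hp ⊢
        tauto
  have hnotin2A : nA ∉ lettersP P₂ := fun h => (hmem2 nA h).1 rfl
  have hnotin2B : nB ∉ lettersP P₂ := fun h => (hmem2 nB h).2 rfl
  have hpermL : List.Perm (lettersP P₁) (nA :: nB :: lettersP P₂) := by
    have hn1 : (lettersP P₁).Nodup := by rw [lettersP]; exact List.nodup_dedup _
    have hn2 : (lettersP P₂).Nodup := by rw [lettersP]; exact List.nodup_dedup _
    refine (List.perm_ext_iff_of_nodup hn1 ?_).2 ?_
    · simp [List.nodup_cons, hAB, hnotin2A, hnotin2B, hn2]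
    · intro n
      rw [hL1mem n]
      simp [List.mem_cons]
  have hsDX : ∀ n ∈ lettersP P₂, ∀ n' ∈ lettersP P₂, ∀ j,
      sigmaHat rep orb P₁ j n n' = sigmaHat rep orb P₂ j n n' := by
    intro n hn n' hn' j
    obtain ⟨h1, h2⟩ := hmem2 n hn
    obtain ⟨h1', h2'⟩ := hmem2 n' hn'
    unfold sigmaHat
    rw [hp1T n h1 h2 (hocc2 n hn), hp2T n h1 h2 (hocc2 n hn),
      hp1T n' h1' h2' (hocc2 n' hn'), hp2T n' h1' h2' (hocc2 n' hn'),
      hprojT n h1 h2, hprojT n' h1' h2', hc1T n' h1' h2', hc2T n' h1' h2']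
    simp only [phi_lt_phi]
  have hsDAB : ∀ n ∈ lettersP P₂, ∀ j,
      sigmaHat rep orb P₁ j n nA + sigmaHat rep orb P₁ j n nB ∈ Ksub l := by
    intro n hn j
    obtain ⟨h1, h2⟩ := hmem2 n hn
    have hne := hocc2 n hn
    have eA : sigmaHat rep orb P₁ j n nA =
        if pos1 P₂ n < E ∧ E ≤ pos2 P₂ n ∧ pos2 P₂ n < E + Y ∧ cy = j then
          eps rep orb (τ b) • ehat (orb (projP P₁ n)) (orb b)
        else if E ≤ pos1 P₂ n ∧ pos1 P₂ n < E + Y ∧ E + Y ≤ pos2 P₂ n ∧ cx = j then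
          (-eps rep orb (τ b)) • ehat (orb (projP P₁ n)) (orb b)
        else 0 := by
      unfold sigmaHat
      rw [hp1T n h1 h2 hne, hp2T n h1 h2 hne, hp1A, hp2A, hprojA, hc1A, hc2A, hot b]
      refine if_congr ?_ rfl (if_congr ?_ rfl rfl)
      · simp only [phi]; split_ifs <;> omega
      · simp only [phi]; split_ifs <;> omega
    have eB : sigmaHat rep orb P₁ j n nB =
        if pos1 P₂ n < E ∧ E ≤ pos2 P₂ n ∧ pos2 P₂ n < E + Y ∧ cy = j then
          eps rep orb b • ehat (orb (projP P₁ n)) (orb b)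
        else if E ≤ pos1 P₂ n ∧ pos1 P₂ n < E + Y ∧ E + Y ≤ pos2 P₂ n ∧ cx = j then
          (-eps rep orb b) • ehat (orb (projP P₁ n)) (orb b)
        else 0 := by
      unfold sigmaHat
      rw [hp1T n h1 h2 hne, hp2T n h1 h2 hne, hp1B, hp2B, hprojB, hc1B, hc2B]
      refine if_congr ?_ rfl (if_congr ?_ rfl rfl)
      · simp only [phi]; split_ifs <;> omega
      · simp only [phi]; split_ifs <;> omega
    rw [eA, eB]
    split_ifs with hC1 hC2
    · have he : eps rep orb (τ b) • ehat (orb (projP P₁ n)) (orb b) +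
          eps rep orb b • ehat (orb (projP P₁ n)) (orb b) =
          ((1 : ℤ) * (eps rep orb (τ b) + eps rep orb b)) • ehat (orb (projP P₁ n)) (orb b) := by
        module
      rw [he]
      exact ksub_mem_aux τ l m rep orb hcrs b 1 _
    · have he : (-eps rep orb (τ b)) • ehat (orb (projP P₁ n)) (orb b) +
          (-eps rep orb b) • ehat (orb (projP P₁ n)) (orb b) =
          ((-1 : ℤ) * (eps rep orb (τ b) + eps rep orb b)) • ehat (orb (projP P₁ n)) (orb b) := by
        module
      rw [he]
      exact ksub_mem_aux τ l m rep orb hcrs b (-1) _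
    · simpa using (Ksub l).zero_mem
  have hsAX : ∀ n' ∈ lettersP P₂, ∀ j,
      sigmaHat rep orb P₁ j nA n' = sigmaHat rep orb P₁ j nB n' := by
    intro n' hn' j
    obtain ⟨h1, h2⟩ := hmem2 n' hn'
    have hne := hocc2 n' hn'
    have eA : sigmaHat rep orb P₁ j nA n' =
        if (E ≤ pos1 P₂ n' ∧ pos1 P₂ n' < E + Y ∧ E + Y ≤ pos2 P₂ n') ∧ comp2 P₁ n' = j then
          eps rep orb (projP P₁ n') • ehat (orb b) (orb (projP P₁ n'))
        else if (pos1 P₂ n' < E ∧ E ≤ pos2 P₂ n' ∧ pos2 P₂ n' < E + Y) ∧ comp1 P₁ n' = j then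
          (-eps rep orb (projP P₁ n')) • ehat (orb b) (orb (projP P₁ n'))
        else 0 := by
      unfold sigmaHat
      rw [hp1T n' h1 h2 hne, hp2T n' h1 h2 hne, hp1A, hp2A, hprojA, hot b]
      refine if_congr ?_ rfl (if_congr ?_ rfl rfl)
      · simp only [phi]; split_ifs <;> omega
      · simp only [phi]; split_ifs <;> omega
    have eB : sigmaHat rep orb P₁ j nB n' =
        if (E ≤ pos1 P₂ n' ∧ pos1 P₂ n' < E + Y ∧ E + Y ≤ pos2 P₂ n') ∧ comp2 P₁ n' = j then
          eps rep orb (projP P₁ n') • ehat (orb b) (orb (projP P₁ n'))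
        else if (pos1 P₂ n' < E ∧ E ≤ pos2 P₂ n' ∧ pos2 P₂ n' < E + Y) ∧ comp1 P₁ n' = j then
          (-eps rep orb (projP P₁ n')) • ehat (orb b) (orb (projP P₁ n'))
        else 0 := by
      unfold sigmaHat
      rw [hp1T n' h1 h2 hne, hp2T n' h1 h2 hne, hp1B, hp2B, hprojB]
      refine if_congr ?_ rfl (if_congr ?_ rfl rfl)
      · simp only [phi]; split_ifs <;> omega
      · simp only [phi]; split_ifs <;> omega
    rw [eA, eB]
  have hsAA : ∀ j, sigmaHat rep orb P₁ j nA nA = 0 := by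
    intro j; unfold sigmaHat
    rw [hp1A, hp2A, if_neg (by omega), if_neg (by omega)]
  have hsAB : ∀ j, sigmaHat rep orb P₁ j nA nB = 0 := by
    intro j; unfold sigmaHat
    rw [hp1A, hp2A, hp1B, hp2B, if_neg (by omega), if_neg (by omega)]
  have hsBA : ∀ j, sigmaHat rep orb P₁ j nB nA = 0 := by
    intro j; unfold sigmaHat
    rw [hp1A, hp2A, hp1B, hp2B, if_neg (by omega), if_neg (by omega)]
  have hsBB : ∀ j, sigmaHat rep orb P₁ j nB nB = 0 := by
    intro j; unfold sigmaHat
    rw [hp1B, hp2B, if_neg (by omega), if_neg (by omega)]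
  have hlh1 : ∀ nD j, lHat rep orb P₁ nD j = sigmaHat rep orb P₁ j nD nA +
      (sigmaHat rep orb P₁ j nD nB +
        ((lettersP P₂).map fun nX => sigmaHat rep orb P₁ j nD nX).sum) := by
    intro nD j
    rw [lHat, List.Perm.sum_eq (hpermL.map _), List.map_cons, List.map_cons,
      List.sum_cons, List.sum_cons]
  have hlD : ∀ n ∈ lettersP P₂, ∀ j, lHat rep orb P₁ n j =
      (sigmaHat rep orb P₁ j n nA + sigmaHat rep orb P₁ j n nB) + lHat rep orb P₂ n j := by
    intro n hn j
    rw [hlh1 n j]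
    have hm : ((lettersP P₂).map fun nX => sigmaHat rep orb P₁ j n nX) =
        ((lettersP P₂).map fun nX => sigmaHat rep orb P₂ j n nX) :=
      List.map_congr_left (fun nX hX => hsDX n hn nX hX j)
    rw [hm, ← lHat]
    exact (add_assoc _ _ _).symm
  have hlPT2 : ∀ n ∈ lettersP P₂, lP l rep orb P₁ n = lP l rep orb P₂ n := by
    intro n hn
    funext j
    show kmk l (lHat rep orb P₁ n j) = kmk l (lHat rep orb P₂ n j)
    rw [kmk]
    refine QuotientAddGroup.eq.2 ?_
    have hK := (Ksub l).neg_mem (hsDAB n hn j)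
    convert hK using 1
    rw [hlD n hn j]
    abel
  have hlPAB : lP l rep orb P₁ nA = lP l rep orb P₁ nB := by
    funext j
    show kmk l (lHat rep orb P₁ nA j) = kmk l (lHat rep orb P₁ nB j)
    congr 1
    rw [hlh1 nA j, hlh1 nB j, hsAA j, hsAB j, hsBA j, hsBB j]
    simp only [zero_add]
    exact congrArg List.sum (List.map_congr_left fun n' hn' => hsAX n' hn' j)
  have hsupp : ∀ j' pq, pq.1 ≠ orb b → lHat rep orb P₁ nA j' pq = 0 := by
    intro j' pq hpq
    rw [lHat, listSum_apply]
    apply List.sum_eq_zero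
    intro c hc
    obtain ⟨nX, hnX, rfl⟩ := List.mem_map.1 hc
    have hq : pq.1 ≠ orb (projP P₁ nA) := by rw [hprojA, hot b]; exact hpq
    unfold sigmaHat
    rw [apply_ite (fun f : (ℕ × ℕ) → ℤ => f pq), apply_ite (fun f : (ℕ × ℕ) → ℤ => f pq)]
    split_ifs
    · exact smul_ehat_apply _ _ _ _ hq
    · exact smul_ehat_apply _ _ _ _ hq
    · rfl
  have part2 : ∀ nD ∈ lettersP P₁, nD ≠ nA → nD ≠ nB →
      ∀ j : ℕ, lP l rep orb P₁ nD j = lP l rep orb P₂ nD j := by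
    intro nD hD hDA hDB j
    have h2 : nD ∈ lettersP P₂ := by
      rcases (hL1mem nD).1 hD with h | h | h
      · exact absurd h hDA
      · exact absurd h hDB
      · exact h
    exact congrFun (hlPT2 nD h2) j
  have hCmem : ∀ j n, n ∈ compLetters P₁ j ↔
      ((n = nA ∨ n = nB) ∧ (cx = j ∨ cy = j)) ∨ n ∈ compLetters P₂ j := by
    intro j n
    rw [mem_compLetters, mem_compLetters, hF1, hF2]
    constructor
    · rintro ⟨t, ht, rfl, hcomp⟩
      simp only [List.mem_append, List.mem_cons] at ht
      rcases ht with h | rfl | rfl | h | rfl | rfl | h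
      · exact Or.inr ⟨t, by simp [h], rfl, hcomp⟩
      · exact Or.inl ⟨Or.inl rfl, Or.inl hcomp⟩
      · exact Or.inl ⟨Or.inr rfl, Or.inl hcomp⟩
      · exact Or.inr ⟨t, by simp [h], rfl, hcomp⟩
      · exact Or.inl ⟨Or.inr rfl, Or.inr hcomp⟩
      · exact Or.inl ⟨Or.inl rfl, Or.inr hcomp⟩
      · exact Or.inr ⟨t, by simp [h], rfl, hcomp⟩
    · rintro (⟨hab, hcj⟩ | ⟨t, ht, rfl, hcomp⟩)
      · rcases hab with rfl | rfl
        · rcases hcj with h | h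
          · exact ⟨(n, τ b, cx), by simp, rfl, h⟩
          · exact ⟨(n, τ b, cy), by simp, rfl, h⟩
        · rcases hcj with h | h
          · exact ⟨(n, b, cx), by simp, rfl, h⟩
          · exact ⟨(n, b, cy), by simp, rfl, h⟩
      · refine ⟨t, ?_, rfl, hcomp⟩
        simp only [List.mem_append, List.mem_cons] at ht ⊢
        tauto
  have hCnoA : ∀ j, nA ∉ compLetters P₂ j := by
    intro j hj
    obtain ⟨t, ht, h1, _⟩ := mem_compLetters.1 hj
    rw [hF2] at ht
    simp only [List.mem_append] at ht
    rcases ht with h | h | h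
    · exact hnoxA t h h1
    · exact hnoyA t h h1
    · exact hnozA t h h1
  have hCnoB : ∀ j, nB ∉ compLetters P₂ j := by
    intro j hj
    obtain ⟨t, ht, h1, _⟩ := mem_compLetters.1 hj
    rw [hF2] at ht
    simp only [List.mem_append] at ht
    rcases ht with h | h | h
    · exact hnoxB t h h1
    · exact hnoyB t h h1
    · exact hnozB t h h1
  have hCsub : ∀ j n, n ∈ compLetters P₂ j → n ∈ lettersP P₂ := by
    intro j n hn
    obtain ⟨t, ht, rfl, _⟩ := mem_compLetters.1 hn
    exact mem_lettersP.2 ⟨(t.1, t.2.1), flat_mem ht, rfl⟩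
  have hCn1 : ∀ j, (compLetters P₁ j).Nodup := by
    intro j; rw [compLetters]; exact List.nodup_dedup _
  have hCn2 : ∀ j, (compLetters P₂ j).Nodup := by
    intro j; rw [compLetters]; exact List.nodup_dedup _
  have hCperm : ∀ j, (cx = j ∨ cy = j) →
      List.Perm (compLetters P₁ j) (nA :: nB :: compLetters P₂ j) := by
    intro j hj
    refine (List.perm_ext_iff_of_nodup (hCn1 j) ?_).2 ?_
    · simp [List.nodup_cons, hAB, hCnoA j, hCnoB j, hCn2 j]
    · intro n
      rw [hCmem j n]
      simp only [List.mem_cons]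
      constructor
      · rintro (⟨h, _⟩ | h) <;> tauto
      · rintro (rfl | rfl | h) <;> tauto
  have hCperm' : ∀ j, ¬(cx = j ∨ cy = j) →
      List.Perm (compLetters P₁ j) (compLetters P₂ j) := by
    intro j hj
    refine (List.perm_ext_iff_of_nodup (hCn1 j) (hCn2 j)).2 ?_
    intro n
    rw [hCmem j n]
    constructor
    · rintro (⟨h, hc⟩ | h)
      · exact absurd hc hj
      · exact h
    · intro h; exact Or.inr h
  refine ⟨?_, part2, eps_add_eps τ l m rep orb hcrs b, eps_add_eps_mod2 τ l m rep orb hcrs b⟩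
  intro j v hv
  have htail : ((compLetters P₂ j).filter fun n => decide (lP l rep orb P₁ n = v)).map
        (fun n => eps rep orb (projP P₁ n)) =
      ((compLetters P₂ j).filter fun n => decide (lP l rep orb P₂ n = v)).map
        (fun n => eps rep orb (projP P₂ n)) := by
    rw [List.filter_congr (fun n hn => by rw [hlPT2 n (hCsub j n hn)])]
    apply List.map_congr_left
    intro n hn
    have hn2 := hCsub j n (List.mem_of_mem_filter hn)
    obtain ⟨hA', hB'⟩ := hmem2 n hn2
    rw [hprojT n hA' hB']
  have hScongr : (((compLetters P₂ j).filter fun n => decide (lP l rep orb P₁ n = v)).map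
        (fun n => eps rep orb (projP P₁ n))).sum =
      (((compLetters P₂ j).filter fun n => decide (lP l rep orb P₂ n = v)).map
        (fun n => eps rep orb (projP P₂ n))).sum := congrArg List.sum htail
  have hvzero : τ b = b → lP l rep orb P₁ nA = v → TypeI l v → False := by
    intro hfix hvA hT
    apply hv
    funext j'
    have hq := orb_gt_of_fixed τ l m rep orb hcrs b hfix
    have hvj : kmk l (lHat rep orb P₁ nA j') = v j' := congrFun hvA j'
    rw [← hvj, kmk]
    refine (QuotientAddGroup.eq_zero_iff _).2 ?_
    intro pq
    constructor
    · rintro ⟨ha, _⟩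
      exact hsupp j' pq (by omega)
    · intro hnle
      by_cases hpq : pq.1 = orb b
      · exact ((hT j' pq.1 pq.2 (by rw [hpq]; exact hq)) _ hvj).2 hnle
      · rw [hsupp j' pq hpq]; exact dvd_zero 2
  constructor
  · rw [B1, B1]
    split_ifs with hT
    · by_cases hj : cx = j ∨ cy = j
      · rw [List.Perm.sum_eq (((hCperm j hj).filter _).map _), List.filter_cons,
          List.filter_cons]
        by_cases hvA : lP l rep orb P₁ nA = v
        · have hvB : lP l rep orb P₁ nB = v := by rw [← hlPAB]; exact hvA
          by_cases hfix : τ b = b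
          · exact absurd (hvzero hfix hvA hT) not_false
          · rw [if_pos (by simp [hvA]), if_pos (by simp [hvB]), List.map_cons,
              List.map_cons, List.sum_cons, List.sum_cons, hprojA, hprojB, ← add_assoc,
              eps_add_eps τ l m rep orb hcrs b hfix, zero_add]
            exact hScongr
        · have hvB : ¬ lP l rep orb P₁ nB = v := by rw [← hlPAB]; exact hvA
          rw [if_neg (by simp [hvA]), if_neg (by simp [hvB])]
          exact hScongr
      · rw [List.Perm.sum_eq (((hCperm' j hj).filter _).map _)]
        exact hScongr
    · rfl
  · rw [B2, B2]
    split_ifs with hT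
    · have hmod : ((eps rep orb (τ b) + eps rep orb b : ℤ) : ZMod 2) = 0 :=
        eps_add_eps_mod2 τ l m rep orb hcrs b
      by_cases hj : cx = j ∨ cy = j
      · rw [List.Perm.sum_eq (((hCperm j hj).filter _).map _), List.filter_cons,
          List.filter_cons]
        by_cases hvA : lP l rep orb P₁ nA = v
        · have hvB : lP l rep orb P₁ nB = v := by rw [← hlPAB]; exact hvA
          rw [if_pos (by simp [hvA]), if_pos (by simp [hvB]), List.map_cons,
            List.map_cons, List.sum_cons, List.sum_cons, hprojA, hprojB, ← add_assoc,
            Int.cast_add, hmod, zero_add]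
          exact congrArg Int.cast hScongr
        · have hvB : ¬ lP l rep orb P₁ nB = v := by rw [← hlPAB]; exact hvA
          rw [if_neg (by simp [hvA]), if_neg (by simp [hvB])]
          exact congrArg Int.cast hScongr
      · rw [List.Perm.sum_eq (((hCperm' j hj).filter _).map _)]
        exact congrArg Int.cast hScongr
    · rfl
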